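/- For any sequence of integers c₁,…,c_k, Tr M_q(c₁,c₂,…,c_k) = Tr M_q(c_k,c_{k-1},…,c₁), i.e. the trace of the q-deformed continued fraction matrix is invariant under reversal of the coefficient sequence. -/

import Mathlib

open LaurentPolynomial
open Matrix

/-- The `q`-integer `[c]_q = (1-q^c)/(1-q)` for an arbitrary integer `c`:
`[c]_q = 1+q+⋯+q^{c-1}` for `c ≥ 0` and `[-n]_q = -q^{-1}-⋯-q^{-n}` for `n > 0`. -/
noncomputable def qInt (c : ℤ) : LaurentPolynomial ℤ :=
  if 0 ≤ c then ∑ i ∈ Finset.range c.toNat, T (i : ℤ)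
  else -∑ i ∈ Finset.range (-c).toNat, T (-(i + 1) : ℤ)

/-- `M_q(c₁,…,c_k) = ∏ᵢ [[ [cᵢ]_q, -q^{cᵢ-1}],[1,0]]` over `ℤ[q,q^{-1}]`. -/
noncomputable def Mq (l : List ℤ) : Matrix (Fin 2) (Fin 2) (LaurentPolynomial ℤ) :=
  (l.map fun c => !![qInt c, -T (c - 1); 1, 0]).prod

/-- `Tr M_q(c₁,…,c_k) = Tr M_q(c_k,…,c₁)`: the trace of the `q`-deformed
continued fraction matrix is invariant under reversal of the coefficients. -/
lemma aux_sum (n : ℕ) : ((1 : LaurentPolynomial ℤ) - T 1) * ∑ i ∈ Finset.range n, T (i : ℤ) = 1 - T (n : ℤ) := by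
  have h : ∀ i : ℕ, T (i : ℤ) = (T 1 : LaurentPolynomial ℤ) ^ i := by
    intro i
    rw [T_pow]
    norm_num
  simp_rw [h]
  have := geom_sum_mul (T 1 : LaurentPolynomial ℤ) n
  linear_combination -this

lemma one_sub_T_mul_qInt (c : ℤ) : (1 - T 1) * qInt c = 1 - T c := by
  unfold qInt
  split_ifs with hc
  · have := aux_sum c.toNat
    rwa [Int.toNat_of_nonneg hc] at this
  · push_neg at hc
    set m := (-c).toNat with hm
    have hcm : c = -(m : ℤ) := by omega
    have hrefl : ∑ i ∈ Finset.range m, (T (-(i + 1) : ℤ) : LaurentPolynomial ℤ)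
        = T c * ∑ i ∈ Finset.range m, T (i : ℤ) := by
      rw [Finset.mul_sum]
      rw [← Finset.sum_range_reflect]
      apply Finset.sum_congr rfl
      intro i hi
      simp only [Finset.mem_range] at hi
      rw [← T_add]
      congr 1
      omega
    rw [hrefl, mul_neg, ← mul_assoc, mul_comm (1 - T 1) (T c), mul_assoc, aux_sum,
      mul_sub, mul_one, ← T_add]
    have : c + (m : ℤ) = 0 := by omega
    rw [this, T_zero]
    ring

noncomputable def Ac (c : ℤ) : Matrix (Fin 2) (Fin 2) (LaurentPolynomial ℤ) :=
  !![qInt c, -T (c - 1); 1, 0]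

noncomputable def Sm : Matrix (Fin 2) (Fin 2) (LaurentPolynomial ℤ) :=
  !![T 1, 1 - T 1; 1 - T 1, -1]

lemma swap_lemma (c : ℤ) : Sm * Ac c = (Ac c)ᵀ * Sm := by
  have hc := one_sub_T_mul_qInt c
  have hT : (T 1 : LaurentPolynomial ℤ) * T (c - 1) = T c := by
    rw [← T_add]; ring_nf
  unfold Sm Ac
  have ht : (!![qInt c, -T (c - 1); 1, 0] : Matrix (Fin 2) (Fin 2) (LaurentPolynomial ℤ))ᵀ
      = !![qInt c, 1; -T (c - 1), 0] := by
    rw [Matrix.eta_fin_two (!![qInt c, -T (c - 1); 1, 0])ᵀ]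
    simp
  rw [ht, Matrix.mul_fin_two, Matrix.mul_fin_two]
  congr 1
  simp only [Matrix.vecCons, Fin.cons_inj]
  refine ⟨⟨by ring, by linear_combination -hT - hc, trivial⟩,
    ⟨by linear_combination hc + hT, by ring, trivial⟩, trivial⟩

lemma key_lemma (l : List ℤ) : Sm * Mq l = (Mq l.reverse)ᵀ * Sm := by
  induction l with
  | nil => simp [Mq]
  | cons c l ih =>
    have h1 : Mq (c :: l) = Ac c * Mq l := by simp [Mq, Ac]
    have h2 : Mq ((c :: l).reverse) = Mq l.reverse * Ac c := by
      simp [Mq, Ac, List.reverse_cons]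
    rw [h1, h2, Matrix.transpose_mul, ← mul_assoc, swap_lemma, mul_assoc, ih, mul_assoc]

lemma det_Sm_ne_zero : Sm.det ≠ 0 := by
  have hdet : Sm.det = T 1 - T 2 - 1 := by
    unfold Sm
    rw [Matrix.det_fin_two_of]
    have : (T 1 : LaurentPolynomial ℤ) * T 1 = T 2 := by rw [← T_add]; norm_num
    linear_combination -this
  rw [hdet]
  have : (T 1 - T 2 - 1 : LaurentPolynomial ℤ)
      = Polynomial.toLaurent (Polynomial.X - Polynomial.X ^ 2 - 1 : Polynomial ℤ) := by
    simp [Polynomial.toLaurent_X_pow, Polynomial.toLaurent_X, Polynomial.toLaurent_one,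
      map_sub]
  rw [this]
  rw [Polynomial.toLaurent_ne_zero]
  intro h
  have := congrArg (fun p => Polynomial.coeff p 0) h
  simp at this

theorem trace_Mq_reverse (l : List ℤ) :
    (Mq l).trace = (Mq l.reverse).trace := by
  have key := key_lemma l
  have h1 : Sm.det • (Mq l).trace = Sm.det • (Mq l.reverse).trace := by
    calc Sm.det • (Mq l).trace = (Sm.det • Mq l).trace := by rw [Matrix.trace_smul]
    _ = ((Sm.adjugate * Sm) * Mq l).trace := by
          rw [Matrix.adjugate_mul, Matrix.smul_mul, one_mul]
    _ = (Sm.adjugate * (Sm * Mq l)).trace := by rw [mul_assoc]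
    _ = (Sm.adjugate * ((Mq l.reverse)ᵀ * Sm)).trace := by rw [key]
    _ = (((Mq l.reverse)ᵀ * Sm) * Sm.adjugate).trace := by rw [Matrix.trace_mul_comm]
    _ = ((Mq l.reverse)ᵀ * (Sm * Sm.adjugate)).trace := by rw [mul_assoc]
    _ = ((Mq l.reverse)ᵀ * (Sm.det • 1)).trace := by rw [Matrix.mul_adjugate]
    _ = (Sm.det • (Mq l.reverse)ᵀ).trace := by rw [Matrix.mul_smul, mul_one]
    _ = Sm.det • ((Mq l.reverse)ᵀ).trace := by rw [Matrix.trace_smul]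
    _ = Sm.det • (Mq l.reverse).trace := by rw [Matrix.trace_transpose]
  have := mul_left_cancel₀ det_Sm_ne_zero (by simpa [smul_eq_mul] using h1)
  exact this
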